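/- Let X be a measurable space, and for k = 1, 2 let p_k(y, t | x) be conditional distributions with common outcome kernel p(y | x, t) (i.e., p_k(y | x, t) = p(y | x, t)) where t ∈ {-1, 1} and y ∈ ℝ. Define u(x) = E[y | x, t=1] - E[y | x, t=-1]. Then for every x with p_1(t=1|x) ≠ p_2(t=1|x), u(x) = 2 (E_{p_1(y|x)}[y] - E_{p_2(y|x)}[y]) / (E_{p_1(t|x)}[t] - E_{p_2(t|x)}[t]). -/
import Mathlib


/-- Lemma 1 (uplift as ratio of differences): two populations share the outcome
kernel, represented via its conditional means `m1 x = E[y | x, t = 1]` and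
`mm1 x = E[y | x, t = -1]`; `q1 x`, `q2 x` are the treatment probabilities
`p_k(t = 1 | x)`.  Then `p_k(y|x)`'s mean is `m1 x * qk x + mm1 x * (1 - qk x)`
and `E_{p_k(t|x)}[t] = qk x - (1 - qk x)`.  The individual uplift
`u x = m1 x - mm1 x` equals twice the ratio of differences whenever
`q1 x ≠ q2 x`. -/
theorem uplift_eq_diff_ratio {X : Type*} (m1 mm1 q1 q2 : X → ℝ) (x : X)
    (h : q1 x ≠ q2 x) :
    m1 x - mm1 x =
      2 * (((m1 x * q1 x + mm1 x * (1 - q1 x)) - (m1 x * q2 x + mm1 x * (1 - q2 x)))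
        / ((q1 x - (1 - q1 x)) - (q2 x - (1 - q2 x)))) := by
  have hne : q1 x - q2 x ≠ 0 := sub_ne_zero.mpr h
  have h2 : (q1 x - (1 - q1 x)) - (q2 x - (1 - q2 x)) = 2 * (q1 x - q2 x) := by ring
  rw [h2, ← mul_div_assoc, eq_div_iff (mul_ne_zero two_ne_zero hne)]
  ring
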